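/- Let S be a well-ordered subset of a totally ordered set X of order type α. Then the topological closure of S in X is well-ordered and has order type either α or α+1. -/

import Mathlib

open Set Ordinal

private lemma closure_key {X : Type*} [LinearOrder X] [TopologicalSpace X] [OrderTopology X]
    {S : Set X} (hwf : WellFounded ((· < ·) : ↥S → ↥S → Prop))
    {x y : X} (hx : x ∈ closure S) (hyx : y < x) : ∃ s ∈ S, y < s ∧ s ≤ x := by
  by_contra hc
  push_neg at hc
  rcases Set.eq_empty_or_nonempty {p : ↥S | x < ↑p} with hA | hA
  · have hsub : S ⊆ Iic y := by
      intro s hs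
      by_contra h'
      simp only [mem_Iic, not_le] at h'
      have hxs : x < s := hc s hs h'
      have : (⟨s, hs⟩ : ↥S) ∈ {p : ↥S | x < ↑p} := hxs
      rw [hA] at this
      exact this.elim
    exact absurd (closure_minimal hsub isClosed_Iic hx) (not_le.2 hyx)
  · have hxm : x < ↑(hwf.min _ hA) := hwf.min_mem {p : ↥S | x < ↑p} hA
    obtain ⟨s, ⟨hys, hsm⟩, hsS⟩ :=
      mem_closure_iff.1 hx (Ioo y ↑(hwf.min _ hA)) isOpen_Ioo ⟨hyx, hxm⟩
    have hxs : x < s := hc s hsS hys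
    exact hwf.not_lt_min {p : ↥S | x < ↑p} (show x < ↑(⟨s, hsS⟩ : ↥S) from hxs)
      (Subtype.mk_lt_mk.2 hsm)

private lemma closure_wf {X : Type*} [LinearOrder X] [TopologicalSpace X] [OrderTopology X]
    {S : Set X} (hwf : WellFounded ((· < ·) : ↥S → ↥S → Prop)) :
    WellFounded ((· < ·) : ↥(closure S) → ↥(closure S) → Prop) := by
  rw [WellFounded.wellFounded_iff_has_min]
  intro A hA
  by_cases hB : {p : ↥S | ∃ a ∈ A, (↑a : X) ≤ ↑p}.Nonempty
  · obtain ⟨a0, ha0A, ha0m⟩ := hwf.min_mem _ hB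
    by_cases hlt : ∃ a ∈ A, (↑a : X) < ↑(hwf.min _ hB)
    · obtain ⟨a, haA, ham⟩ := hlt
      refine ⟨a, haA, fun b hbA hba => ?_⟩
      obtain ⟨s, hsS, hbs, hsa⟩ := closure_key hwf a.2 (show (↑b : X) < ↑a from hba)
      have hmem : (⟨s, hsS⟩ : ↥S) ∈ {p : ↥S | ∃ a ∈ A, (↑a : X) ≤ ↑p} := ⟨b, hbA, le_of_lt hbs⟩
      exact hwf.not_lt_min _ hmem (Subtype.mk_lt_mk.2 (lt_of_le_of_lt hsa ham))
    · push_neg at hlt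
      refine ⟨a0, ha0A, fun b hbA hba => ?_⟩
      have h1 : (↑a0 : X) = ↑(hwf.min _ hB) := le_antisymm ha0m (hlt a0 ha0A)
      have hbm : (↑b : X) < ↑(hwf.min _ hB) := by
        rw [← h1]; exact hba
      exact absurd hbm (not_lt.2 (hlt b hbA))
  · obtain ⟨a0, ha0⟩ := hA
    refine ⟨a0, ha0, fun b hbA hba => ?_⟩
    obtain ⟨s, hsS, hbs, _⟩ := closure_key hwf a0.2 (show (↑b : X) < ↑a0 from hba)
    exact hB ⟨⟨s, hsS⟩, b, hbA, le_of_lt hbs⟩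

private lemma typein_le_of_lt {γ : Type*} [LinearOrder γ] [WellFoundedLT γ]
    (v : γ) (c : Ordinal)
    (h : ∀ w, w < v → Ordinal.typein ((· < ·) : γ → γ → Prop) w < c) :
    Ordinal.typein ((· < ·) : γ → γ → Prop) v ≤ c := by
  by_contra hcon
  push_neg at hcon
  obtain ⟨w, hw⟩ := Ordinal.typein_surj ((· < ·) : γ → γ → Prop)
    (hcon.trans (Ordinal.typein_lt_type _ v))
  have hwv : w < v := (Ordinal.typein_lt_typein ((· < ·) : γ → γ → Prop)).1 (by
    rw [hw]; exact hcon)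
  have := h w hwv
  rw [hw] at this
  exact lt_irrefl c this

theorem closure_orderType {X : Type*} [LinearOrder X] [TopologicalSpace X]
    [OrderTopology X] (S : Set X) (α : Ordinal)
    (h : Nonempty (S ≃o Set.Iio α)) :
    ∃ β : Ordinal, (β = α ∨ β = α + 1) ∧
      Nonempty ((closure S : Set X) ≃o Set.Iio β) := by
  obtain ⟨e⟩ := h
  -- well-foundedness of S
  haveI : WellFoundedLT ↥S := ⟨(e.toOrderEmbedding.ltEmbedding).wellFounded
    (Subtype.wellFoundedLT _).wf⟩
  have hwfS : WellFounded ((· < ·) : ↥S → ↥S → Prop) := (inferInstance : WellFoundedLT ↥S).wf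
  haveI : WellFoundedLT ↥(closure S) := ⟨closure_wf hwfS⟩
  -- order types in the universe of X
  set α' := Ordinal.type ((· < ·) : ↥S → ↥S → Prop) with hα'
  set β' := Ordinal.type ((· < ·) : ↥(closure S) → ↥(closure S) → Prop) with hβ'
  set tS : ↥S → Ordinal := fun s => Ordinal.typein ((· < ·) : ↥S → ↥S → Prop) s with htS
  set tT : ↥(closure S) → Ordinal :=
    fun v => Ordinal.typein ((· < ·) : ↥(closure S) → ↥(closure S) → Prop) v with htT
  have hj : ∀ s : ↥S, (↑s : X) ∈ closure S := fun s => subset_closure s.2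
  set j : ↥S → ↥(closure S) := fun s => ⟨↑s, hj s⟩ with hjdef
  -- main claim by well-founded induction
  have claimC : ∀ s : ↥S, ∀ v : ↥(closure S), (↑v : X) < ↑s → tT v ≤ tS s := by
    intro s
    induction s using hwfS.induction with
    | _ s IH =>
      intro v hv
      by_cases hvS : (↑v : X) ∈ S
      · -- v is in S
        have hlt : (⟨↑v, hvS⟩ : ↥S) < s := Subtype.coe_lt_coe.1 hv
        have hM : tT v ≤ tS ⟨↑v, hvS⟩ + 1 := by
          apply typein_le_of_lt
          intro w hw
          have hle : tT w ≤ tS ⟨↑v, hvS⟩ := IH _ hlt w hw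
          rw [Ordinal.add_one_eq_succ, Order.lt_succ_iff]
          exact hle
        have hlt' : tS ⟨↑v, hvS⟩ < tS s := (Ordinal.typein_lt_typein _).2 hlt
        calc tT v ≤ tS ⟨↑v, hvS⟩ + 1 := hM
          _ ≤ tS s := by rw [Ordinal.add_one_eq_succ, Order.succ_le_iff]; exact hlt'
      · -- v is not in S
        apply typein_le_of_lt
        intro w hw
        obtain ⟨s', hs'S, hws', hs'v⟩ := closure_key hwfS v.2 (show (↑w : X) < ↑v from hw)
        have hs'v' : s' < (↑v : X) := lt_of_le_of_ne hs'v (fun hh => hvS (hh ▸ hs'S))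
        have hs's : (⟨s', hs'S⟩ : ↥S) < s := Subtype.coe_lt_coe.1 (lt_trans hs'v' hv)
        have hM : tT (j ⟨s', hs'S⟩) ≤ tS ⟨s', hs'S⟩ + 1 := by
          apply typein_le_of_lt
          intro u hu
          have hle : tT u ≤ tS ⟨s', hs'S⟩ := IH _ hs's u hu
          rw [Ordinal.add_one_eq_succ, Order.lt_succ_iff]
          exact hle
        have h1 : tT w < tT (j ⟨s', hs'S⟩) := (Ordinal.typein_lt_typein _).2 hws'
        have h2 : tS ⟨s', hs'S⟩ + 1 ≤ tS s := by
          rw [Ordinal.add_one_eq_succ, Order.succ_le_iff]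
          exact (Ordinal.typein_lt_typein _).2 hs's
        exact lt_of_lt_of_le h1 (le_trans hM h2)
  -- typein bound on S-elements
  have hMall : ∀ s : ↥S, tT (j s) ≤ tS s + 1 := by
    intro s
    apply typein_le_of_lt
    intro w hw
    rw [Ordinal.add_one_eq_succ, Order.lt_succ_iff]
    exact claimC s w hw
  -- every element of closure S has typein ≤ α'
  have hall : ∀ u : ↥(closure S), tT u ≤ α' := by
    intro u
    by_cases huS : (↑u : X) ∈ S
    · have h1 : tT u ≤ tS ⟨↑u, huS⟩ + 1 := hMall ⟨↑u, huS⟩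
      refine h1.trans ?_
      rw [Ordinal.add_one_eq_succ, Order.succ_le_iff]
      exact Ordinal.typein_lt_type _ _
    · apply typein_le_of_lt
      intro w hw
      obtain ⟨s', hs'S, hws', hs'u⟩ := closure_key hwfS u.2 (show (↑w : X) < ↑u from hw)
      have hs'u' : s' < (↑u : X) := lt_of_le_of_ne hs'u (fun hh => huS (hh ▸ hs'S))
      have h1 : tT w < tT (j ⟨s', hs'S⟩) := (Ordinal.typein_lt_typein _).2 hws'
      have h2 : tS ⟨s', hs'S⟩ + 1 ≤ α' := by
        rw [Ordinal.add_one_eq_succ, Order.succ_le_iff]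
        exact Ordinal.typein_lt_type _ _
      exact lt_of_lt_of_le h1 ((hMall _).trans h2)
  -- β' ≤ α' + 1
  have hβle : β' ≤ α' + 1 := by
    by_contra hcon
    push_neg at hcon
    obtain ⟨u, hu⟩ := Ordinal.typein_surj ((· < ·) : ↥(closure S) → ↥(closure S) → Prop) hcon
    have := hall u
    rw [show tT u = α' + 1 from hu] at this
    rw [Ordinal.add_one_eq_succ] at this
    exact absurd this (not_le.2 (Order.lt_succ _))
  -- α' ≤ β'
  have hαle : α' ≤ β' := by
    refine Ordinal.type_le_iff'.2 ⟨⟨⟨j, ?_⟩, ?_⟩⟩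
    · intro a b hab
      have hv : (j a).val = (j b).val := congrArg Subtype.val hab
      exact Subtype.ext hv
    · intro a b
      exact Iff.rfl
  -- the equation from h, via toType
  haveI : IsWellOrder α.ToType ((· < ·) : α.ToType → α.ToType → Prop) := isWellOrder_lt
  have e2 : ↥S ≃o α.ToType := e.trans (Ordinal.ToType.mk (o := α))
  have hS := (Ordinal.lift_type_eq.{_, _, 0}).2 ⟨e2.toRelIsoLT⟩
  rw [Ordinal.type_toType] at hS
  rcases eq_or_lt_of_le hβle with hcase | hcase
  · -- β' = α' + 1
    haveI : IsWellOrder (α + 1).ToType ((· < ·) : (α+1).ToType → (α+1).ToType → Prop) :=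
      isWellOrder_lt
    refine ⟨α + 1, Or.inr rfl, ?_⟩
    have key : Nonempty (↥(closure S) ≃o (α + 1).ToType) := by
      refine ⟨OrderIso.ofRelIsoLT (Classical.choice ((Ordinal.lift_type_eq.{_, _, 0}).1 ?_))⟩
      rw [Ordinal.type_toType, ← hβ', hcase]
      simp only [Ordinal.lift_add, Ordinal.lift_one]
      rw [hS]
    obtain ⟨f⟩ := key
    exact ⟨f.trans (Ordinal.ToType.mk (o := α + 1)).symm⟩
  · -- β' ≤ α', so β' = α'
    have hba : β' = α' := le_antisymm (by
      rw [Ordinal.add_one_eq_succ] at hcase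
      exact Order.lt_succ_iff.1 hcase) hαle
    refine ⟨α, Or.inl rfl, ?_⟩
    have key : Nonempty (↥(closure S) ≃o α.ToType) := by
      refine ⟨OrderIso.ofRelIsoLT (Classical.choice ((Ordinal.lift_type_eq.{_, _, 0}).1 ?_))⟩
      rw [Ordinal.type_toType, ← hβ', hba]
      exact hS
    obtain ⟨f⟩ := key
    exact ⟨f.trans (Ordinal.ToType.mk (o := α)).symm⟩
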